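/- Assume the Erdős–Rado theorem in forms λ₁ → (λ₂)^n_κ with λ₁ = (beth_{n(n+2)-1}(κ))^+, and the polarized relation λ₁ →^{λ₂-or} (λ₂)^n_κ for λ₂ = (beth_{n-1}(κ))^+ disjoint linear orders, and λ₂ → (κ^+)^n_κ. Then the structural partition relation for convexly ordered equivalence relations λ₁ →^{ceq} (κ^+)^n_κ follows. -/
import Mathlib


open Cardinal

/-- The ordinary partition relation `lam → (mu)^n_kap`, stated for colorings of
increasing `n`-tuples of a linear order. -/
def ArrowOrd (lam mu kap : Cardinal) (n : ℕ) : Prop :=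
  ∀ (α : Type) [LinearOrder α], #α = lam → ∀ (C : Type), #C = kap →
    ∀ c : (Fin n → α) → C,
      ∃ X : Set α, mu ≤ #X ∧
        ∀ x y : Fin n → α, StrictMono x → StrictMono y →
          (∀ i, x i ∈ X) → (∀ i, y i ∈ X) → c x = c y

/-- The structural partition relation `lam →^{chi-or} (mu)^n_kap` for `chi` disjoint
linear orders: a `lam`-big structure (every part of size ≥ `lam`) colored with `kap`
colors has a `mu`-big type-homogeneous substructure, where the color of an increasing
tuple is determined by which parts its coordinates lie in. -/
def ArrowPart (lam mu kap chi : Cardinal) (n : ℕ) : Prop :=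
  ∀ (α : Type) [LinearOrder α] (β : Type) [LinearOrder β], #β = chi →
    ∀ P : α → β, Monotone P → (∀ b : β, lam ≤ #(P ⁻¹' {b})) →
      ∀ (C : Type), #C = kap → ∀ c : (Fin n → α) → C,
        ∃ X : Set α, (∀ b : β, mu ≤ #↥(X ∩ P ⁻¹' {b})) ∧
          ∀ x y : Fin n → α, StrictMono x → StrictMono y →
            (∀ i, x i ∈ X) → (∀ i, y i ∈ X) →
            (∀ i, P (x i) = P (y i)) → c x = c y

/-- The structural partition relation `lam →^{ceq} (mu)^n_kap` for convexly ordered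
equivalence relations: `lam`-big means at least `lam` classes each of size ≥ `lam`,
and type-homogeneity means the color of an increasing tuple depends only on the
equivalence pattern among its coordinates. -/
def ArrowCeq (lam mu kap : Cardinal) (n : ℕ) : Prop :=
  ∀ (I : Type) [LinearOrder I] (E : I → I → Prop), Equivalence E →
    (∀ x y z : I, E x z → x < y → y < z → E x y) →
    lam ≤ #(Quot E) → (∀ x : I, lam ≤ #{y : I // E x y}) →
    ∀ (C : Type), #C = kap → ∀ c : (Fin n → I) → C,
      ∃ S : Set I,
        mu ≤ #(Quot (fun x y : S => E x.1 y.1)) ∧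
        (∀ x : S, mu ≤ #{y : S // E x.1 y.1}) ∧
        ∀ x y : Fin n → I, StrictMono x → StrictMono y →
          (∀ k, x k ∈ S) → (∀ k, y k ∈ S) →
          (∀ k l, E (x k) (x l) ↔ E (y k) (y l)) → c x = c y

private def blkN' {n : ℕ} (p : Fin n → Fin n → Bool) : ℕ → ℕ
  | 0 => 0
  | (i+1) => blkN' p i +
      (if h : i + 1 < n then (if p ⟨i, Nat.lt_of_succ_lt h⟩ ⟨i+1, h⟩ then 0 else 1) else 0)

private lemma blkN'_le {n : ℕ} (p : Fin n → Fin n → Bool) : ∀ i, blkN' p i ≤ i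
  | 0 => le_refl 0
  | (i+1) => by
      have := blkN'_le p i
      simp only [blkN']
      split <;> [split <;> omega; omega]

private lemma blkN'_step {n : ℕ} (p : Fin n → Fin n → Bool) (i : ℕ) :
    blkN' p (i+1) = blkN' p i ∨ blkN' p (i+1) = blkN' p i + 1 := by
  simp only [blkN']
  split <;> [split <;> omega; omega]

private lemma blkN'_mono {n : ℕ} (p : Fin n → Fin n → Bool) : Monotone (blkN' p) := by
  apply monotone_nat_of_le_succ
  intro i
  rcases blkN'_step p i with h | h <;> omega

private lemma blkN'_succ_iff {n : ℕ} (p : Fin n → Fin n → Bool) (i : ℕ) (h : i + 1 < n) :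
    blkN' p (i+1) = blkN' p i ↔ p ⟨i, Nat.lt_of_succ_lt h⟩ ⟨i+1, h⟩ = true := by
  simp only [blkN']
  rw [dif_pos h]
  split <;> rename_i hsp
  · simpa using hsp
  · simp only [Bool.not_eq_true] at hsp
    simp [hsp]

private lemma blkN'_reach {n : ℕ} (p : Fin n → Fin n → Bool) :
    ∀ i v, v ≤ blkN' p i → ∃ i' ≤ i, blkN' p i' = v := by
  intro i
  induction i with
  | zero => intro v hv; exact ⟨0, le_refl _, by simp only [blkN'] at hv ⊢; omega⟩
  | succ i ih =>
      intro v hv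
      rcases le_or_gt v (blkN' p i) with h | h
      · obtain ⟨i', h1, h2⟩ := ih v h
        exact ⟨i', Nat.le_succ_of_le h1, h2⟩
      · refine ⟨i+1, le_refl _, ?_⟩
        rcases blkN'_step p i with h' | h' <;> omega

private def blkF {n : ℕ} (p : Fin n → Fin n → Bool) (i : Fin n) : Fin n :=
  ⟨blkN' p i.1, lt_of_le_of_lt (blkN'_le p i.1) i.isLt⟩

private noncomputable def patB {I : Type} (E : I → I → Prop) {n : ℕ}
    (x : Fin n → I) (k l : Fin n) : Bool := @decide (E (x k) (x l)) (Classical.dec _)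

private lemma patB_iff {I : Type} (E : I → I → Prop) {n : ℕ} (x : Fin n → I) (k l : Fin n) :
    patB E x k l = true ↔ E (x k) (x l) := by
  unfold patB
  exact @decide_eq_true_iff _ (Classical.dec _)

private lemma patB_congr {I : Type} (E : I → I → Prop) {n : ℕ} (x y : Fin n → I)
    (h : ∀ k l, E (x k) (x l) ↔ E (y k) (y l)) : patB E x = patB E y := by
  funext k l
  unfold patB
  exact @decide_eq_decide _ _ (Classical.dec _) (Classical.dec _) |>.mpr (h k l)

private lemma eqvGen_le' {α : Type*} {r s : α → α → Prop} (hs : Equivalence s)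
    (h : ∀ a b, r a b → s a b) : ∀ a b, Relation.EqvGen r a b → s a b := by
  intro a b h'
  induction h' with
  | rel a b h'' => exact h _ _ h''
  | refl => exact hs.refl _
  | symm _ _ _ ih => exact hs.symm ih
  | trans _ _ _ _ _ ih1 ih2 => exact hs.trans ih1 ih2

/-- Given the Erdős–Rado theorem `λ₁ → (λ₂)^n_κ` with `λ₁ = beth_{n(n+2)-1}(κ)⁺`, the
polarized partition relation `λ₁ →^{λ₂-or} (λ₂)^n_κ` for `λ₂ = beth_{n-1}(κ)⁺` disjoint
linear orders, and `λ₂ → (κ⁺)^n_κ`, the structural partition relation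
`λ₁ →^{ceq} (κ⁺)^n_κ` for convexly ordered equivalence relations follows. -/
theorem stmt4 (κ : Cardinal) (hκ : ℵ₀ ≤ κ) (n : ℕ) (hn : 1 ≤ n)
    (h1 : ArrowOrd (Order.succ ((fun x : Cardinal => 2 ^ x)^[n * (n + 2) - 1] κ))
      (Order.succ ((fun x : Cardinal => 2 ^ x)^[n - 1] κ)) κ n)
    (h2 : ArrowPart (Order.succ ((fun x : Cardinal => 2 ^ x)^[n * (n + 2) - 1] κ))
      (Order.succ ((fun x : Cardinal => 2 ^ x)^[n - 1] κ)) κ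
      (Order.succ ((fun x : Cardinal => 2 ^ x)^[n - 1] κ)) n)
    (h3 : ArrowOrd (Order.succ ((fun x : Cardinal => 2 ^ x)^[n - 1] κ))
      (Order.succ κ) κ n) :
    ArrowCeq (Order.succ ((fun x : Cardinal => 2 ^ x)^[n * (n + 2) - 1] κ))
      (Order.succ κ) κ n := by
  classical
  intro I _ E hE hconv hQ hcls C hC c
  set L1c := Order.succ ((fun x : Cardinal => 2 ^ x)^[n * (n + 2) - 1] κ) with hL1c
  set L2c := Order.succ ((fun x : Cardinal => 2 ^ x)^[n - 1] κ) with hL2c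
  -- basic cardinal facts
  have hiter : ∀ (a : Cardinal) (m : ℕ), a ≤ (fun x : Cardinal => 2 ^ x)^[m] a := by
    intro a m
    induction m with
    | zero => simp
    | succ m ih =>
        rw [Function.iterate_succ_apply']
        exact ih.trans (Cardinal.cantor _).le
  have hκL2 : Order.succ κ ≤ L2c := Order.succ_le_succ (hiter κ (n - 1))
  have hℵL2 : ℵ₀ ≤ L2c := hκ.trans ((hiter κ (n - 1)).trans (Order.le_succ _))
  have hL2L1 : L2c ≤ L1c := by
    have hmul : n * (n + 2) - 1 = n * (n + 1) + (n - 1) := by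
      have : n * (n + 2) = n * (n + 1) + n := by ring
      omega
    rw [hL1c, hL2c, hmul, Function.iterate_add_apply]
    exact Order.succ_le_succ (hiter _ _)
  -- convexity order lemma
  have keyLT : ∀ a b a' b' : I, a < b → ¬ E a b → E a a' → E b b' → a' < b' := by
    intro a b a' b' hab hnE haa hbb
    by_contra hcon
    push_neg at hcon
    apply hnE
    rcases lt_trichotomy b' a with h1 | h1 | h1
    · have hEb'b : E b' b := hE.symm hbb
      have : E b' a := hconv b' a b hEb'b h1 hab
      exact hE.trans (hE.symm this) hEb'b
    · rw [← h1]; exact hE.symm hbb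
    · have hEab' : E a b' := by
        rcases eq_or_lt_of_le hcon with he | hlt
        · rw [he]; exact haa
        · exact hconv a b' a' haa h1 hlt
      exact hE.trans hEab' (hE.symm hbb)
  -- construct T : a set of λ₂ many pairwise inequivalent representatives
  have hQ2 : L2c ≤ #(Quot E) := hL2L1.trans hQ
  obtain ⟨Q, hQcard⟩ := Cardinal.le_mk_iff_exists_set.mp hQ2
  have houtinj : Function.Injective (Quot.out : Quot E → I) := by
    intro q q' h
    rw [← Quot.out_eq q, ← Quot.out_eq q', h]
  set T : Set I := Quot.out '' Q with hT
  have hTcard : #↥T = L2c := by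
    rw [hT, Cardinal.mk_image_eq houtinj, hQcard]
  have hTsep : ∀ t t' : ↥T, E t.1 t'.1 → t = t' := by
    rintro ⟨t, q, hq, rfl⟩ ⟨t', q', hq', rfl⟩ h
    have hmk : Quot.mk E q.out = Quot.mk E q'.out := Quot.sound h
    rw [Quot.out_eq, Quot.out_eq] at hmk
    exact Subtype.ext (congrArg Quot.out hmk)
  -- the union of the chosen classes
  set A : Set I := {z : I | ∃ t : ↥T, E t.1 z} with hA
  have hex : ∀ x : ↥A, ∃ t : ↥T, E t.1 x.1 := fun x => x.2
  choose P hP using hex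
  have hPuniq : ∀ (x : ↥A) (t : ↥T), E t.1 x.1 → P x = t := by
    intro x t h
    exact hTsep _ _ (hE.trans (hP x) (hE.symm h))
  have hPmono : Monotone P := by
    intro a b hab
    by_cases hEab : E a.1 b.1
    · have : P b = P a := hPuniq b (P a) (hE.trans (hP a) hEab)
      rw [this]
    · have hne : a.1 ≠ b.1 := fun h => hEab (h ▸ hE.refl a.1)
      have hlt : a.1 < b.1 := lt_of_le_of_ne hab hne
      have : (P a).1 < (P b).1 :=
        keyLT a.1 b.1 (P a).1 (P b).1 hlt hEab (hE.symm (hP a)) (hE.symm (hP b))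
      exact le_of_lt (Subtype.coe_lt_coe.mp this)
  have hparts : ∀ b : ↥T, L1c ≤ #(P ⁻¹' {b}) := by
    intro b
    refine le_trans (hcls b.1) (Cardinal.mk_le_of_injective
      (f := fun y : {y : I // E b.1 y} =>
        (⟨⟨y.1, ⟨b, y.2⟩⟩, hPuniq ⟨y.1, ⟨b, y.2⟩⟩ b y.2⟩ : ↥(P ⁻¹' {b}))) ?_)
    intro y y' h
    exact Subtype.ext (congrArg (fun z : ↥(P ⁻¹' {b}) => z.1.1) h)
  -- apply the polarized relation
  set c₁ : (Fin n → ↥A) → C := fun z => c (fun i => (z i).1) with hc₁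
  obtain ⟨X, hX1, hX2⟩ := h2 ↥A ↥T hTcard P hPmono hparts C hC c₁
  -- choose, in each part, an increasing n-sequence inside X
  have hginf : ∀ b : ↥T, ∃ g : Fin n → ↥A, StrictMono g ∧ ∀ k, g k ∈ X ∩ P ⁻¹' {b} := by
    intro b
    have hinf : (X ∩ P ⁻¹' {b} : Set ↥A).Infinite := by
      rw [← Set.infinite_coe_iff, Cardinal.infinite_iff]
      exact hℵL2.trans (hX1 b)
    obtain ⟨F, hFsub, hFcard⟩ := hinf.exists_subset_card_eq n
    refine ⟨fun k => (F.orderIsoOfFin hFcard k).1, ?_, ?_⟩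
    · intro k l hkl
      exact Subtype.coe_lt_coe.mpr ((F.orderIsoOfFin hFcard).strictMono hkl)
    · intro k
      exact hFsub (F.orderIsoOfFin hFcard k).2
  choose g hg1 hg2 using hginf
  -- secondary coloring on tuples of representatives
  have hC'card : #((Fin n → Fin n → Bool) → C) = κ := by
    rw [← Cardinal.power_def C (Fin n → Fin n → Bool), hC, Cardinal.mk_fintype]
    exact Cardinal.power_nat_eq hκ Fintype.card_pos
  set c' : (Fin n → ↥T) → ((Fin n → Fin n → Bool) → C) :=
    fun t q => c₁ (fun i => g (t (blkF q i)) i) with hc'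
  obtain ⟨Yset, hY1, hY2⟩ := h3 ↥T hTcard ((Fin n → Fin n → Bool) → C) hC'card c'
  -- prune the top of Yset
  set Good : ↥T → Prop :=
    fun r => ∃ u : Fin n → ↥T, StrictMono u ∧ ∀ k, u k ∈ Yset ∧ r < u k with hGood
  set Y' : Set ↥T := {t | t ∈ Yset ∧ Good t} with hY'
  have hGoodOf : ∀ (t : ↥T) (F : Finset ↥T), ↑F ⊆ Yset ∩ Set.Ioi t → F.card = n → Good t := by
    intro t F hsub hcard
    refine ⟨fun k => (F.orderIsoOfFin hcard k).1, ?_, ?_⟩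
    · intro k l hkl
      exact Subtype.coe_lt_coe.mpr ((F.orderIsoOfFin hcard).strictMono hkl)
    · intro k
      exact ⟨(hsub (F.orderIsoOfFin hcard k).2).1, (hsub (F.orderIsoOfFin hcard k).2).2⟩
  have hbad : ∀ t : ↥T, t ∈ Yset → ¬ Good t →
      (Yset ∩ Set.Ioi t).Finite ∧ (Yset ∩ Set.Ioi t).ncard < n := by
    intro t ht hng
    have hfin : (Yset ∩ Set.Ioi t).Finite := by
      by_contra hinf
      have hinf' : (Yset ∩ Set.Ioi t).Infinite := hinf
      obtain ⟨F, hF1, hF2⟩ := hinf'.exists_subset_card_eq n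
      exact hng (hGoodOf t F hF1 hF2)
    refine ⟨hfin, ?_⟩
    by_contra hge
    push_neg at hge
    have hcard : n ≤ hfin.toFinset.card := by
      rwa [Set.ncard_eq_toFinset_card _ hfin] at hge
    obtain ⟨F, hF1, hF2⟩ := Finset.exists_subset_card_eq hcard
    refine hng (hGoodOf t F ?_ hF2)
    intro a ha
    have := hF1 ha
    rwa [Set.Finite.mem_toFinset] at this
  have hY'card : Order.succ κ ≤ #↥Y' := by
    by_contra hlt'
    push_neg at hlt'
    have h1' : #↥Y' ≤ κ := Order.lt_succ_iff.mp hlt'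
    have hD : #↥(Yset \ Y') ≤ (n : Cardinal) := by
      have hinj : Function.Injective (fun t : ↥(Yset \ Y') =>
          (⟨(Yset ∩ Set.Ioi t.1).ncard,
            (hbad t.1 t.2.1 (fun hg => t.2.2 ⟨t.2.1, hg⟩)).2⟩ : Fin n)) := by
        intro t t' heq
        have heq' : (Yset ∩ Set.Ioi t.1).ncard = (Yset ∩ Set.Ioi t'.1).ncard :=
          congrArg Fin.val heq
        have hb := hbad t.1 t.2.1 (fun hg => t.2.2 ⟨t.2.1, hg⟩)
        have hb' := hbad t'.1 t'.2.1 (fun hg => t'.2.2 ⟨t'.2.1, hg⟩)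
        rcases lt_trichotomy t.1 t'.1 with h | h | h
        · exfalso
          have hss : Yset ∩ Set.Ioi t'.1 ⊂ Yset ∩ Set.Ioi t.1 := by
            constructor
            · exact Set.inter_subset_inter_right _ (Set.Ioi_subset_Ioi h.le)
            · intro hsub
              have := hsub ⟨t'.2.1, h⟩
              exact absurd this.2 (lt_irrefl t'.1)
          have := Set.ncard_lt_ncard hss hb.1
          omega
        · exact Subtype.ext h
        · exfalso
          have hss : Yset ∩ Set.Ioi t.1 ⊂ Yset ∩ Set.Ioi t'.1 := by
            constructor
            · exact Set.inter_subset_inter_right _ (Set.Ioi_subset_Ioi h.le)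
            · intro hsub
              have := hsub ⟨t.2.1, h⟩
              exact absurd this.2 (lt_irrefl t.1)
          have := Set.ncard_lt_ncard hss hb'.1
          omega
      calc #↥(Yset \ Y') ≤ #(Fin n) := Cardinal.mk_le_of_injective hinj
        _ = n := Cardinal.mk_fin n
    have hsplit : #↥Yset ≤ #↥Y' + #↥(Yset \ Y') := by
      refine le_trans (Cardinal.mk_le_mk_of_subset ?_) (Cardinal.mk_union_le _ _)
      intro a ha
      by_cases hg : a ∈ Y'
      · exact Or.inl hg
      · exact Or.inr ⟨ha, hg⟩
    have hfinal : #↥Yset ≤ κ := by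
      refine hsplit.trans ?_
      have h2' : (#↥(Yset \ Y') : Cardinal) ≤ κ :=
        hD.trans ((Cardinal.nat_lt_aleph0 n).le.trans hκ)
      calc #↥Y' + #↥(Yset \ Y') ≤ κ + κ := add_le_add h1' h2'
        _ = κ := Cardinal.add_eq_self hκ
    exact absurd (hY1.trans hfinal) (Order.lt_succ κ).not_ge
  -- the final set S
  set S : Set I := {z : I | ∃ v : ↥A, (v ∈ X ∧ P v ∈ Y') ∧ v.1 = z} with hSdef
  -- a witness in each part
  have hwit : ∀ b : ↥T, ∃ v : ↥A, v ∈ X ∩ P ⁻¹' {b} := by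
    intro b
    haveI : Infinite ↥(X ∩ P ⁻¹' {b}) := Cardinal.infinite_iff.mpr (hℵL2.trans (hX1 b))
    exact nonempty_subtype.mp inferInstance
  choose w hw using hwit
  have hwP : ∀ b : ↥T, P (w b) = b := fun b => (hw b).2
  -- main lifting lemma
  have main : ∀ (x : Fin n → I), StrictMono x → (∀ k, x k ∈ S) →
      ∃ tx : Fin n → ↥T, StrictMono tx ∧ (∀ j, tx j ∈ Yset) ∧ c x = c' tx (patB E x) := by
    intro x hx hxS
    choose x' hx' using hxS
    have hx'val : ∀ k, (x' k).1 = x k := fun k => (hx' k).2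
    have hx'X : ∀ k, x' k ∈ X := fun k => (hx' k).1.1
    have hx'Y : ∀ k, P (x' k) ∈ Y' := fun k => (hx' k).1.2
    set p := patB E x with hp
    have hx'mono : StrictMono x' := by
      intro a b h
      have : (x' a).1 < (x' b).1 := by rw [hx'val, hx'val]; exact hx h
      exact Subtype.coe_lt_coe.mp this
    -- relating P on x' to E on x
    have hPeqOfE : ∀ i j : Fin n, E (x i) (x j) → P (x' i) = P (x' j) := by
      intro i j h
      apply hPuniq
      have h1 := hP (x' j)
      rw [hx'val] at h1
      have h2 : E (x j) (x' i).1 := by rw [hx'val]; exact hE.symm h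
      exact hE.trans h1 h2
    have hEofPeq : ∀ i j : Fin n, P (x' i) = P (x' j) → E (x i) (x j) := by
      intro i j h
      have h1 := hP (x' i)
      have h2 := hP (x' j)
      rw [hx'val] at h1 h2
      rw [h] at h1
      exact hE.trans (hE.symm h1) h2
    -- block structure lemma
    have aux2 : ∀ (d i : ℕ) (h : i + d < n),
        E (x ⟨i, by omega⟩) (x ⟨i + d, h⟩) → blkN' p (i + d) = blkN' p i := by
      intro d
      induction d with
      | zero => intro i h _; rfl
      | succ d ih =>
          intro i h hEE
          have hd : i + d < n := by omega
          have hEid : E (x ⟨i, by omega⟩) (x ⟨i + d, hd⟩) := by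
            rcases Nat.eq_zero_or_pos d with rfl | hdpos
            · exact hE.refl _
            · refine hconv _ (x ⟨i + d, hd⟩) _ hEE (hx ?_) (hx ?_)
              · rw [Fin.mk_lt_mk]; omega
              · rw [Fin.mk_lt_mk]; omega
          have hcons : E (x ⟨i + d, hd⟩) (x ⟨i + d + 1, by omega⟩) :=
            hE.trans (hE.symm hEid) hEE
          have hstep : blkN' p (i + d + 1) = blkN' p (i + d) := by
            rw [blkN'_succ_iff p (i + d) (by omega), hp]
            exact (patB_iff E x _ _).mpr hcons
          have : blkN' p (i + (d + 1)) = blkN' p (i + d) := hstep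
          rw [this, ih i hd hEid]
    have aux1 : ∀ (d i : ℕ) (h : i + d < n),
        blkN' p (i + d) = blkN' p i → E (x ⟨i, by omega⟩) (x ⟨i + d, h⟩) := by
      intro d
      induction d with
      | zero => intro i h _; exact hE.refl _
      | succ d ih =>
          intro i h hb
          have hd : i + d < n := by omega
          have hm1 : blkN' p i ≤ blkN' p (i + d) := blkN'_mono p (by omega)
          have hm2 : blkN' p (i + d) ≤ blkN' p (i + d + 1) := blkN'_mono p (by omega)
          have hb' : blkN' p (i + d + 1) = blkN' p i := hb
          have he1 : blkN' p (i + d) = blkN' p i := by omega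
          have hstep : blkN' p (i + d + 1) = blkN' p (i + d) := by omega
          have hcons : E (x ⟨i + d, hd⟩) (x ⟨i + d + 1, by omega⟩) := by
            apply (patB_iff E x _ _).mp
            rw [← hp]
            exact (blkN'_succ_iff p (i + d) (by omega)).mp hstep
          exact hE.trans (ih i hd he1) hcons
    have hblkE : ∀ i j : Fin n, blkN' p i.1 = blkN' p j.1 ↔ E (x i) (x j) := by
      have half : ∀ i j : Fin n, i ≤ j → (blkN' p i.1 = blkN' p j.1 ↔ E (x i) (x j)) := by
        intro i j hij
        have hijv : i.1 ≤ j.1 := hij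
        have hd : i.1 + (j.1 - i.1) < n := by omega
        have hi : (⟨i.1, by omega⟩ : Fin n) = i := rfl
        have hj : (⟨i.1 + (j.1 - i.1), hd⟩ : Fin n) = j := by
          apply Fin.ext; simp; omega
        constructor
        · intro hb
          have := aux1 (j.1 - i.1) i.1 hd
            (by rw [show i.1 + (j.1 - i.1) = j.1 from by omega]; exact hb.symm)
          rwa [hi, hj] at this
        · intro hEE
          have := aux2 (j.1 - i.1) i.1 hd (by rw [hi, hj]; exact hEE)
          rw [show i.1 + (j.1 - i.1) = j.1 from by omega] at this
          exact this.symm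
      intro i j
      rcases le_total i j with h | h
      · exact half i j h
      · exact ⟨fun hh => hE.symm ((half j i h).mp hh.symm),
          fun hh => ((half j i h).mpr (hE.symm hh)).symm⟩
    -- representatives of blocks, and the extension above
    set R : Fin n → ↥T := fun i => P (x' i) with hR
    have hRmono : Monotone R := hPmono.comp hx'mono.monotone
    have hnlast : n - 1 < n := by omega
    set rtop : ↥T := R ⟨n - 1, hnlast⟩ with hrtop
    have hRle : ∀ i : Fin n, R i ≤ rtop := by
      intro i
      exact hRmono (show i ≤ ⟨n - 1, hnlast⟩ from by
        rw [Fin.le_def]; simp; omega)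
    obtain ⟨u, humono, hu⟩ := (hx'Y ⟨n - 1, hnlast⟩).2
    set tx : Fin n → ↥T :=
      fun j => if h : ∃ i : Fin n, blkF p i = j then R h.choose else u j with htx
    have htx_eq : ∀ i : Fin n, tx (blkF p i) = R i := by
      intro i
      have hex2 : ∃ i₀ : Fin n, blkF p i₀ = blkF p i := ⟨i, rfl⟩
      have h1 : tx (blkF p i) = R hex2.choose := dif_pos hex2
      have h2 : blkF p hex2.choose = blkF p i := hex2.choose_spec
      have h3 : blkN' p hex2.choose.1 = blkN' p i.1 := congrArg Fin.val h2
      rw [h1, hR]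
      exact hPeqOfE _ _ ((hblkE _ _).mp h3)
    have htxY : ∀ j, tx j ∈ Yset := by
      intro j
      simp only [htx]
      by_cases h : ∃ i : Fin n, blkF p i = j
      · rw [dif_pos h]
        exact (hx'Y h.choose).1
      · rw [dif_neg h]
        exact (hu j).1
    have htxmono : StrictMono tx := by
      intro j j' hjj'
      simp only [htx]
      by_cases h1 : ∃ i : Fin n, blkF p i = j <;> by_cases h2 : ∃ i : Fin n, blkF p i = j'
      · rw [dif_pos h1, dif_pos h2]
        have hs1 : blkF p h1.choose = j := h1.choose_spec
        have hs2 : blkF p h2.choose = j' := h2.choose_spec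
        have hblt : blkN' p h1.choose.1 < blkN' p h2.choose.1 := by
          have := Fin.lt_def.mp hjj'
          rw [← hs1, ← hs2] at this
          exact this
        have hne : ¬ E (x h1.choose) (x h2.choose) := by
          intro hEE
          rw [← hblkE] at hEE
          omega
        have hilt : h1.choose < h2.choose := by
          by_contra hle
          push_neg at hle
          exact absurd (blkN'_mono p (Fin.le_def.mp hle)) (by omega)
        have hp1 := hP (x' h1.choose)
        have hp2 := hP (x' h2.choose)
        rw [hx'val] at hp1 hp2
        have : (R h1.choose).1 < (R h2.choose).1 :=
          keyLT (x h1.choose) (x h2.choose) _ _ (hx hilt) hne (hE.symm hp1) (hE.symm hp2)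
        exact Subtype.coe_lt_coe.mp this
      · rw [dif_pos h1, dif_neg h2]
        exact lt_of_le_of_lt (hRle h1.choose) (hu j').2
      · exfalso
        have hs2 : blkF p h2.choose = j' := h2.choose_spec
        have hjlt : j.1 < blkN' p h2.choose.1 := by
          have := Fin.lt_def.mp hjj'
          rw [← hs2] at this
          exact this
        obtain ⟨m, hm1, hm2⟩ := blkN'_reach p h2.choose.1 j.1 (by omega)
        have hmn : m < n := lt_of_le_of_lt hm1 h2.choose.isLt
        exact h1 ⟨⟨m, hmn⟩, Fin.ext hm2⟩
      · rw [dif_neg h1, dif_neg h2]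
        exact humono hjj'
    -- the comparison tuple inside X
    have hPz : ∀ i : Fin n, P (g (tx (blkF p i)) i) = tx (blkF p i) :=
      fun i => (hg2 (tx (blkF p i)) i).2
    have hzmono : StrictMono (fun i => g (tx (blkF p i)) i) := by
      intro i i' hii'
      show g (tx (blkF p i)) i < g (tx (blkF p i')) i'
      have hble : blkN' p i.1 ≤ blkN' p i'.1 := blkN'_mono p (Fin.le_def.mp hii'.le)
      rcases eq_or_lt_of_le hble with he | hlt
      · have hbf : blkF p i = blkF p i' := Fin.ext he
        rw [hbf]
        exact hg1 (tx (blkF p i')) hii'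
      · have hbf : blkF p i < blkF p i' := Fin.lt_def.mpr hlt
        have htlt : tx (blkF p i) < tx (blkF p i') := htxmono hbf
        have htne : tx (blkF p i) ≠ tx (blkF p i') := htlt.ne
        have hnE : ¬ E (tx (blkF p i)).1 (tx (blkF p i')).1 :=
          fun hEE => htne (hTsep _ _ hEE)
        have hq1 := hP (g (tx (blkF p i)) i)
        have hq2 := hP (g (tx (blkF p i')) i')
        rw [hPz i] at hq1
        rw [hPz i'] at hq2
        have : (g (tx (blkF p i)) i).1 < (g (tx (blkF p i')) i').1 :=
          keyLT (tx (blkF p i)).1 (tx (blkF p i')).1 _ _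
            (Subtype.coe_lt_coe.mpr htlt) hnE hq1 hq2
        exact Subtype.coe_lt_coe.mp this
    have hchain : c₁ x' = c₁ (fun i => g (tx (blkF p i)) i) := by
      apply hX2 x' _ hx'mono hzmono hx'X (fun i => (hg2 (tx (blkF p i)) i).1)
      intro i
      rw [hPz i, htx_eq i]
    refine ⟨tx, htxmono, htxY, ?_⟩
    have hcx : c x = c₁ x' := by
      rw [hc₁]
      exact congrArg c (funext fun i => (hx'val i).symm)
    rw [hcx, hchain]
  -- conclusion
  refine ⟨S, ?_, ?_, ?_⟩
  · -- many classes
    have hrelEq : Equivalence (fun a b : ↥S => E a.1 b.1) :=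
      ⟨fun a => hE.refl _, fun h => hE.symm h, fun h h' => hE.trans h h'⟩
    have hmemS : ∀ t : ↥Y', (w t.1).1 ∈ S := by
      intro t
      exact ⟨w t.1, ⟨(hw t.1).1, by rw [hwP t.1]; exact t.2⟩, rfl⟩
    have hinj : Function.Injective
        (fun t : ↥Y' => Quot.mk (fun a b : ↥S => E a.1 b.1) ⟨(w t.1).1, hmemS t⟩) := by
      intro t t' h
      have hgen := Quot.eqvGen_exact h
      have hEww : E (w t.1).1 (w t'.1).1 :=
        eqvGen_le' hrelEq (fun _ _ hh => hh) _ _ hgen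
      have h1 := hP (w t.1)
      have h2 := hP (w t'.1)
      rw [hwP t.1] at h1
      rw [hwP t'.1] at h2
      have : E t.1.1 t'.1.1 := hE.trans (hE.trans h1 hEww) (hE.symm h2)
      exact Subtype.ext (hTsep _ _ this)
    exact hY'card.trans (Cardinal.mk_le_of_injective hinj)
  · -- each class is large
    rintro ⟨z, w₀, ⟨hw₀X, hw₀Y⟩, hw₀v⟩
    have hbig : Order.succ κ ≤ #↥(X ∩ P ⁻¹' {P w₀}) := hκL2.trans (hX1 (P w₀))
    refine hbig.trans (Cardinal.mk_le_of_injective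
      (f := fun q : ↥(X ∩ P ⁻¹' {P w₀}) =>
        (⟨⟨q.1.1, ⟨q.1, ⟨q.2.1, by rw [show P q.1 = P w₀ from q.2.2]; exact hw₀Y⟩, rfl⟩⟩,
          ?_⟩ : {y : ↥S // E z y.1})) ?_)
    · have h1 := hP q.1
      have h2 := hP w₀
      rw [show P q.1 = P w₀ from q.2.2] at h1
      rw [hw₀v] at h2
      exact hE.trans (hE.symm h2) h1
    · intro q q' h
      have : q.1.1 = q'.1.1 := congrArg (fun r : {y : ↥S // E z y.1} => r.1.1) h
      exact Subtype.ext (Subtype.ext this)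
  · intro x y hx hy hxS hyS hpat
    obtain ⟨tx, htxm, htxY, hcx⟩ := main x hx hxS
    obtain ⟨ty, htym, htyY, hcy⟩ := main y hy hyS
    have hpp : patB E x = patB E y := patB_congr E x y hpat
    have hcc : c' tx = c' ty := hY2 tx ty htxm htym htxY htyY
    rw [hcx, hcy, hpp, hcc]
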